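/- Let m, n ≥ 1, let γ, τ, δ > 0 with η := √(τ+γ) < 1/2, let A be a random matrix over F₂^{m×n}, and let B be any bad-set assignment for A. Then Pr[A is (τ,δ)-bad with respect to B] ≤ m·2^{−τ·n} + m·δ·2^{h(η)·m}. -/

import Mathlib

open Finset

open Classical in
/-- Probability of an event for a random matrix over `F₂` with mass function `μ`. -/
noncomputable def prEvt {m n : ℕ} (μ : Matrix (Fin m) (Fin n) (ZMod 2) → ℝ)
    (E : Matrix (Fin m) (Fin n) (ZMod 2) → Prop) : ℝ :=
  ∑ A, if E A then μ A else 0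

/-- `rowsAgree i A B` says that the first `i` rows of `A` and `B` coincide. -/
def rowsAgree {m n : ℕ} (i : ℕ) (A B : Matrix (Fin m) (Fin n) (ZMod 2)) : Prop :=
  ∀ j : Fin m, (j : ℕ) < i → A j = B j

/-- `pIdx μ i A₀` is the conditional probability that row `i` of a `μ`-random matrix equals
row `i` of `A₀`, given that the previous rows agree with those of `A₀`. -/
noncomputable def pIdx {m n : ℕ} (μ : Matrix (Fin m) (Fin n) (ZMod 2) → ℝ)
    (i : Fin m) (A₀ : Matrix (Fin m) (Fin n) (ZMod 2)) : ℝ :=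
  prEvt μ (fun B => B i = A₀ i ∧ rowsAgree (i : ℕ) B A₀)
    / prEvt μ (fun B => rowsAgree (i : ℕ) B A₀)

/-- `qIdx μ i A₀ = -log₂ (pIdx μ i A₀)`. -/
noncomputable def qIdx {m n : ℕ} (μ : Matrix (Fin m) (Fin n) (ZMod 2) → ℝ)
    (i : Fin m) (A₀ : Matrix (Fin m) (Fin n) (ZMod 2)) : ℝ :=
  -Real.logb 2 (pIdx μ i A₀)

/-- `A₀` is `τ`-rare if some conditional row probability is below `2 ^ (-n (1 + τ))`. -/
def tauRare {m n : ℕ} (μ : Matrix (Fin m) (Fin n) (ZMod 2) → ℝ) (τ : ℝ)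
    (A₀ : Matrix (Fin m) (Fin n) (ZMod 2)) : Prop :=
  ∃ i : Fin m, pIdx μ i A₀ < (2 : ℝ) ^ (-((n : ℝ) * (1 + τ)))

/-- A bad-set assignment for the random matrix distributed according to `μ`: every `τ`-rare
matrix in the support is mapped to `⊥` (here `none`) and every non-`τ`-rare matrix in the
support is mapped to a set of at most `√(τ+γ)·m` rows outside of which the conditional
surprise `qᵢ` is at least `(1 - √(τ+γ))·n`. -/
def IsBadSetAssignment {m n : ℕ} (μ : Matrix (Fin m) (Fin n) (ZMod 2) → ℝ) (τ γ : ℝ)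
    (B : Matrix (Fin m) (Fin n) (ZMod 2) → Option (Finset (Fin m))) : Prop :=
  ∀ A₀, 0 < μ A₀ →
    (tauRare μ τ A₀ → B A₀ = none) ∧
    (¬ tauRare μ τ A₀ → ∃ S : Finset (Fin m), B A₀ = some S ∧
      (S.card : ℝ) ≤ Real.sqrt (τ + γ) * (m : ℝ) ∧
      ∀ i : Fin m, i ∉ S → (1 - Real.sqrt (τ + γ)) * (n : ℝ) ≤ qIdx μ i A₀)

/-- `A₀` is `(τ,δ)`-bad with respect to the bad-set assignment `B`: either `A₀` is `τ`-rare,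
or for some `i` the conditional probability that `B` of the random matrix equals `B A₀`, given
that the first `i` rows agree with `A₀`, is below `δ`. -/
def IsTauDeltaBad {m n : ℕ} (μ : Matrix (Fin m) (Fin n) (ZMod 2) → ℝ) (τ δ : ℝ)
    (B : Matrix (Fin m) (Fin n) (ZMod 2) → Option (Finset (Fin m)))
    (A₀ : Matrix (Fin m) (Fin n) (ZMod 2)) : Prop :=
  tauRare μ τ A₀ ∨ ∃ i : Fin m,
    prEvt μ (fun C => B C = B A₀ ∧ rowsAgree (i : ℕ) C A₀)
      / prEvt μ (fun C => rowsAgree (i : ℕ) C A₀) < δ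

/-- The binary entropy function with logarithms in base 2. -/
noncomputable def binEnt (p : ℝ) : ℝ :=
  -(p * Real.logb 2 p) - (1 - p) * Real.logb 2 (1 - p)

section Aux
open Classical
variable {m n : ℕ} (μ : Matrix (Fin m) (Fin n) (ZMod 2) → ℝ)

local notation "Mtx" => Matrix (Fin m) (Fin n) (ZMod 2)

lemma prEvt_nonneg (hμ0 : ∀ A, 0 ≤ μ A) (E : Mtx → Prop) : 0 ≤ prEvt μ E := by
  classical
  refine Finset.sum_nonneg fun A _ => ?_
  split <;> simp [hμ0]

lemma prEvt_congr {E F : Mtx → Prop} (h : ∀ A, E A ↔ F A) : prEvt μ E = prEvt μ F := by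
  classical
  refine Finset.sum_congr rfl fun A _ => ?_
  by_cases hA : E A
  · rw [if_pos hA, if_pos ((h A).1 hA)]
  · rw [if_neg hA, if_neg (fun hF => hA ((h A).2 hF))]

lemma prEvt_mono (hμ0 : ∀ A, 0 ≤ μ A) {E F : Mtx → Prop}
    (h : ∀ A, 0 < μ A → E A → F A) : prEvt μ E ≤ prEvt μ F := by
  classical
  refine Finset.sum_le_sum fun A _ => ?_
  by_cases hE : E A
  · rcases lt_or_eq_of_le (hμ0 A) with hp | hp
    · rw [if_pos hE, if_pos (h A hp hE)]
    · rw [if_pos hE, ← hp]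
      split <;> simp
  · rw [if_neg hE]
    split <;> simp [hμ0]

lemma prEvt_union_le (hμ0 : ∀ A, 0 ≤ μ A) (E F : Mtx → Prop) :
    prEvt μ (fun A => E A ∨ F A) ≤ prEvt μ E + prEvt μ F := by
  classical
  rw [prEvt, prEvt, prEvt, ← Finset.sum_add_distrib]
  refine Finset.sum_le_sum fun A _ => ?_
  by_cases hE : E A
  · rw [if_pos (Or.inl hE), if_pos hE]
    have : (0:ℝ) ≤ if F A then μ A else 0 := by split <;> simp [hμ0]
    linarith
  · by_cases hF : F A
    · rw [if_pos (Or.inr hF), if_neg hE, if_pos hF]; simp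
    · rw [if_neg (by tauto), if_neg hE, if_neg hF]; simp

lemma prEvt_exists_le {ι : Type*} [DecidableEq ι] (hμ0 : ∀ A, 0 ≤ μ A)
    (s : Finset ι) (E : ι → Mtx → Prop) :
    prEvt μ (fun A => ∃ x ∈ s, E x A) ≤ ∑ x ∈ s, prEvt μ (E x) := by
  classical
  simp only [prEvt]
  rw [Finset.sum_comm]
  refine Finset.sum_le_sum fun A _ => ?_
  by_cases hE : ∃ x ∈ s, E x A
  · obtain ⟨x₀, hx₀, hEx₀⟩ := hE
    rw [if_pos ⟨x₀, hx₀, hEx₀⟩]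
    have h1 : μ A = (if E x₀ A then μ A else 0) := (if_pos hEx₀).symm
    refine le_trans (le_of_eq h1) ?_
    exact Finset.single_le_sum (f := fun x => if E x A then μ A else 0)
      (fun x _ => by split <;> simp [hμ0]) hx₀
  · rw [if_neg hE]
    refine Finset.sum_nonneg fun x _ => ?_
    split <;> simp [hμ0]

lemma rowsAgree_refl (k : ℕ) (A : Mtx) : rowsAgree k A A := fun _ _ => rfl

lemma rowsAgree_symm {k : ℕ} {A B : Mtx} (h : rowsAgree k A B) : rowsAgree k B A :=
  fun j hj => (h j hj).symm

lemma rowsAgree_trans {k : ℕ} {A B C : Mtx} (h : rowsAgree k A B) (h' : rowsAgree k B C) :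
    rowsAgree k A C := fun j hj => (h j hj).trans (h' j hj)


def trunc (k : ℕ) (A : Mtx) : Mtx := fun j => if (j : ℕ) < k then A j else 0

lemma trunc_trunc (k : ℕ) (A : Mtx) : trunc k (trunc k A) = trunc k A := by
  funext j; simp only [trunc]; split <;> simp_all

lemma rowsAgree_iff_trunc {k : ℕ} {A B : Mtx} :
    rowsAgree k A B ↔ trunc k A = trunc k B := by
  constructor
  · intro h; funext j; simp only [trunc]
    by_cases hj : (j : ℕ) < k
    · rw [if_pos hj, if_pos hj]; exact h j hj
    · rw [if_neg hj, if_neg hj]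
  · intro h j hj
    have := congrFun h j
    simpa only [trunc, if_pos hj] using this

lemma rowsAgree_trunc (k : ℕ) (A : Mtx) : rowsAgree k A (trunc k A) := by
  intro j hj; simp [trunc, hj]

lemma sum_fp_den (hμ1 : ∑ A, μ A = 1) (k : ℕ) :
    ∑ P : Mtx, (if trunc k P = P then prEvt μ (fun C => rowsAgree k C P) else 0) = 1 := by
  classical
  have step1 : ∀ P : Mtx, (if trunc k P = P then prEvt μ (fun C => rowsAgree k C P) else 0)
      = ∑ C : Mtx, (if trunc k P = P ∧ rowsAgree k C P then μ C else 0) := by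
    intro P
    by_cases hP : trunc k P = P
    · rw [if_pos hP, prEvt]
      refine Finset.sum_congr rfl fun C _ => ?_
      by_cases h : rowsAgree k C P
      · rw [if_pos h, if_pos ⟨hP, h⟩]
      · rw [if_neg h, if_neg (by tauto)]
    · rw [if_neg hP]
      exact (Finset.sum_eq_zero fun C _ => if_neg (by tauto)).symm
  calc ∑ P : Mtx, (if trunc k P = P then prEvt μ (fun C => rowsAgree k C P) else 0)
      = ∑ P : Mtx, ∑ C : Mtx, (if trunc k P = P ∧ rowsAgree k C P then μ C else 0) :=
        Finset.sum_congr rfl fun P _ => step1 P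
    _ = ∑ C : Mtx, ∑ P : Mtx, (if trunc k P = P ∧ rowsAgree k C P then μ C else 0) :=
        Finset.sum_comm
    _ = ∑ C : Mtx, μ C := by
        refine Finset.sum_congr rfl fun C _ => ?_
        have hiff : ∀ P : Mtx, (trunc k P = P ∧ rowsAgree k C P) ↔ P = trunc k C := by
          intro P
          constructor
          · rintro ⟨h1, h2⟩
            exact ((rowsAgree_iff_trunc.1 h2).trans h1).symm
          · rintro rfl
            exact ⟨trunc_trunc k C, rowsAgree_trunc k C⟩
        calc ∑ P : Mtx, (if trunc k P = P ∧ rowsAgree k C P then μ C else 0)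
            = ∑ P : Mtx, (if P = trunc k C then μ C else 0) :=
              Finset.sum_congr rfl fun P _ => by
                by_cases h : P = trunc k C
                · rw [if_pos ((hiff P).2 h), if_pos h]
                · rw [if_neg (fun hh => h ((hiff P).1 hh)), if_neg h]
          _ = μ C := by rw [Finset.sum_ite_eq' Finset.univ (trunc k C) (fun _ => μ C)]; simp
    _ = 1 := hμ1

lemma key_bound (hμ0 : ∀ A, 0 ≤ μ A) (hμ1 : ∑ A, μ A = 1) (k : ℕ) {δ : ℝ} (hδ : 0 ≤ δ)
    (e c : Mtx → Prop)
    (hc : ∀ A, c A → prEvt μ (fun C => e C ∧ rowsAgree k C A)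
        ≤ δ * prEvt μ (fun C => rowsAgree k C A))
    (hci : ∀ A A', rowsAgree k A A' → c A → c A') :
    prEvt μ (fun A => e A ∧ c A) ≤ δ := by
  classical
  have expand : prEvt μ (fun A => e A ∧ c A)
      = ∑ P : Mtx, ∑ A : Mtx, (if trunc k A = P ∧ e A ∧ c A then μ A else 0) := by
    rw [prEvt, ← Finset.sum_comm]
    refine Finset.sum_congr rfl fun A _ => ?_
    by_cases h : e A ∧ c A
    · rw [if_pos h]
      rw [Finset.sum_eq_single (trunc k A)]
      · rw [if_pos ⟨rfl, h⟩]
      · intro P _ hP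
        exact if_neg (fun hh => hP hh.1.symm)
      · intro habs; exact absurd (Finset.mem_univ _) habs
    · rw [if_neg h]
      exact (Finset.sum_eq_zero fun P _ => if_neg (by tauto)).symm
  have inner_le : ∀ P : Mtx, (∑ A : Mtx, (if trunc k A = P ∧ e A ∧ c A then μ A else 0))
      ≤ (if trunc k P = P then δ * prEvt μ (fun C => rowsAgree k C P) else 0) := by
    intro P
    by_cases hP : trunc k P = P
    · rw [if_pos hP]
      by_cases hcP : c P
      · have : (∑ A : Mtx, (if trunc k A = P ∧ e A ∧ c A then μ A else 0))
            = prEvt μ (fun C => e C ∧ rowsAgree k C P) := by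
          rw [prEvt]
          refine Finset.sum_congr rfl fun A _ => ?_
          have hiff : (trunc k A = P ∧ e A ∧ c A) ↔ (e A ∧ rowsAgree k A P) := by
            constructor
            · rintro ⟨h1, h2, h3⟩
              exact ⟨h2, rowsAgree_iff_trunc.2 (by rw [h1, hP])⟩
            · rintro ⟨h1, h2⟩
              refine ⟨by rw [rowsAgree_iff_trunc.1 h2, hP], h1,
                hci P A (rowsAgree_symm h2) hcP⟩
          by_cases h : trunc k A = P ∧ e A ∧ c A
          · rw [if_pos h, if_pos (hiff.1 h)]
          · rw [if_neg h, if_neg (fun hh => h (hiff.2 hh))]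
        rw [this]
        exact hc P hcP
      · have : (∑ A : Mtx, (if trunc k A = P ∧ e A ∧ c A then μ A else 0)) = 0 := by
          refine Finset.sum_eq_zero fun A _ => if_neg ?_
          rintro ⟨h1, _, h3⟩
          exact hcP (hci A P (rowsAgree_iff_trunc.2 (by rw [h1, hP])) h3)
        rw [this]
        exact mul_nonneg hδ (prEvt_nonneg μ hμ0 _)
    · rw [if_neg hP]
      refine le_of_eq (Finset.sum_eq_zero fun A _ => if_neg ?_)
      rintro ⟨h1, -, -⟩
      exact hP (by rw [← h1, trunc_trunc])
  calc prEvt μ (fun A => e A ∧ c A)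
      = ∑ P : Mtx, ∑ A : Mtx, (if trunc k A = P ∧ e A ∧ c A then μ A else 0) := expand
    _ ≤ ∑ P : Mtx, (if trunc k P = P then δ * prEvt μ (fun C => rowsAgree k C P) else 0) :=
        Finset.sum_le_sum fun P _ => inner_le P
    _ = δ * ∑ P : Mtx, (if trunc k P = P then prEvt μ (fun C => rowsAgree k C P) else 0) := by
        rw [Finset.mul_sum]
        exact Finset.sum_congr rfl fun P _ => by split <;> simp
    _ = δ := by rw [sum_fp_den μ hμ1 k, mul_one]


lemma prEvt_rowsAgree_congr (e : Mtx → Prop) {k : ℕ} {A A' : Mtx} (h : rowsAgree k A A') :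
    prEvt μ (fun C => e C ∧ rowsAgree k C A) = prEvt μ (fun C => e C ∧ rowsAgree k C A') :=
  prEvt_congr μ fun C => and_congr_right fun _ =>
    ⟨fun hc => rowsAgree_trans hc h, fun hc => rowsAgree_trans hc (rowsAgree_symm h)⟩

lemma den_rowsAgree_congr {k : ℕ} {A A' : Mtx} (h : rowsAgree k A A') :
    prEvt μ (fun C => rowsAgree k C A) = prEvt μ (fun C => rowsAgree k C A') :=
  prEvt_congr μ fun C =>
    ⟨fun hc => rowsAgree_trans hc h, fun hc => rowsAgree_trans hc (rowsAgree_symm h)⟩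

lemma mu_le_den (hμ0 : ∀ A, 0 ≤ μ A) (k : ℕ) (A : Mtx) :
    μ A ≤ prEvt μ (fun C => rowsAgree k C A) := by
  classical
  rw [prEvt]
  have h1 : μ A = if rowsAgree k A A then μ A else 0 := (if_pos (rowsAgree_refl k A)).symm
  refine le_trans (le_of_eq h1)
    (Finset.single_le_sum (f := fun C => if rowsAgree k C A then μ C else 0)
      (fun C _ => ?_) (Finset.mem_univ A))
  split <;> simp [hμ0]

lemma rare_bound (hμ0 : ∀ A, 0 ≤ μ A) (hμ1 : ∑ A, μ A = 1) (τ : ℝ) :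
    prEvt μ (tauRare μ τ) ≤ (m : ℝ) * (2 : ℝ) ^ (-(τ * (n : ℝ))) := by
  classical
  set ε : ℝ := (2 : ℝ) ^ (-((n : ℝ) * (1 + τ))) with hεdef
  have hε0 : 0 < ε := Real.rpow_pos_of_pos two_pos _
  have hstep : ∀ i : Fin m, prEvt μ (fun A => pIdx μ i A < ε) ≤ (2 : ℝ) ^ (n : ℕ) * ε := by
    intro i
    have hsub : prEvt μ (fun A => pIdx μ i A < ε)
        ≤ prEvt μ (fun A => ∃ r ∈ (Finset.univ : Finset (Fin n → ZMod 2)), A i = r ∧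
            prEvt μ (fun C => C i = r ∧ rowsAgree (i : ℕ) C A)
              ≤ ε * prEvt μ (fun C => rowsAgree (i : ℕ) C A)) := by
      refine prEvt_mono μ hμ0 fun A hA hlt => ?_
      refine ⟨A i, Finset.mem_univ _, rfl, ?_⟩
      rw [pIdx] at hlt
      have hden : 0 < prEvt μ (fun C => rowsAgree (i : ℕ) C A) :=
        lt_of_lt_of_le hA (mu_le_den μ hμ0 _ A)
      calc prEvt μ (fun C => C i = A i ∧ rowsAgree (i : ℕ) C A)
          = prEvt μ (fun C => C i = A i ∧ rowsAgree (i : ℕ) C A)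
              / prEvt μ (fun C => rowsAgree (i : ℕ) C A)
              * prEvt μ (fun C => rowsAgree (i : ℕ) C A) := by field_simp
        _ ≤ ε * prEvt μ (fun C => rowsAgree (i : ℕ) C A) :=
            mul_le_mul_of_nonneg_right (le_of_lt hlt) (le_of_lt hden)
    refine hsub.trans ((prEvt_exists_le μ hμ0 Finset.univ _).trans ?_)
    have hterm : ∀ r : Fin n → ZMod 2,
        prEvt μ (fun A => A i = r ∧
          prEvt μ (fun C => C i = r ∧ rowsAgree (i : ℕ) C A)
            ≤ ε * prEvt μ (fun C => rowsAgree (i : ℕ) C A)) ≤ ε := by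
      intro r
      refine key_bound μ hμ0 hμ1 (i : ℕ) (le_of_lt hε0) (fun A => A i = r) _
        (fun A hc => hc) ?_
      intro A A' h hc
      rw [← prEvt_rowsAgree_congr μ (fun C => C i = r) h, ← den_rowsAgree_congr μ h]
      exact hc
    calc ∑ r : Fin n → ZMod 2, prEvt μ (fun A => A i = r ∧
          prEvt μ (fun C => C i = r ∧ rowsAgree (i : ℕ) C A)
            ≤ ε * prEvt μ (fun C => rowsAgree (i : ℕ) C A))
        ≤ ∑ _r : Fin n → ZMod 2, ε := Finset.sum_le_sum fun r _ => hterm r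
      _ = (2 : ℝ) ^ (n : ℕ) * ε := by
          rw [Finset.sum_const, Finset.card_univ]
          simp [nsmul_eq_mul]
  have hconv : (2 : ℝ) ^ (n : ℕ) * ε = (2 : ℝ) ^ (-(τ * (n : ℝ))) := by
    rw [hεdef, ← Real.rpow_natCast 2 n, ← Real.rpow_add two_pos]
    ring_nf
  have htot : prEvt μ (tauRare μ τ)
      ≤ ∑ i : Fin m, prEvt μ (fun A => pIdx μ i A < ε) := by
    refine le_trans (le_of_eq (prEvt_congr μ fun A => ?_)) (prEvt_exists_le μ hμ0 Finset.univ _)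
    constructor
    · rintro ⟨i, hi⟩; exact ⟨i, Finset.mem_univ _, hi⟩
    · rintro ⟨i, _, hi⟩; exact ⟨i, hi⟩
  refine htot.trans ?_
  calc ∑ i : Fin m, prEvt μ (fun A => pIdx μ i A < ε)
      ≤ ∑ _i : Fin m, (2 : ℝ) ^ (n : ℕ) * ε := Finset.sum_le_sum fun i _ => hstep i
    _ = (m : ℝ) * (2 : ℝ) ^ (-(τ * (n : ℝ))) := by
        rw [Finset.sum_const, Finset.card_univ, Fintype.card_fin, nsmul_eq_mul, hconv]


lemma part2_bound (hμ0 : ∀ A, 0 ≤ μ A) (hμ1 : ∑ A, μ A = 1) (τ γ δ : ℝ) (hδ : 0 < δ)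
    (B : Mtx → Option (Finset (Fin m))) (hB : IsBadSetAssignment μ τ γ B) :
    prEvt μ (fun A => ¬ tauRare μ τ A ∧ ∃ i : Fin m,
        prEvt μ (fun C => B C = B A ∧ rowsAgree (i : ℕ) C A)
          / prEvt μ (fun C => rowsAgree (i : ℕ) C A) < δ)
      ≤ (m : ℝ) * (((Finset.univ.filter
          fun S : Finset (Fin m) => (S.card : ℝ) ≤ Real.sqrt (τ + γ) * (m : ℝ)).card : ℝ) * δ) := by
  classical
  set 𝒮 : Finset (Finset (Fin m)) :=
    Finset.univ.filter fun S : Finset (Fin m) => (S.card : ℝ) ≤ Real.sqrt (τ + γ) * (m : ℝ)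
    with h𝒮
  have hsub : prEvt μ (fun A => ¬ tauRare μ τ A ∧ ∃ i : Fin m,
        prEvt μ (fun C => B C = B A ∧ rowsAgree (i : ℕ) C A)
          / prEvt μ (fun C => rowsAgree (i : ℕ) C A) < δ)
      ≤ prEvt μ (fun A => ∃ i ∈ (Finset.univ : Finset (Fin m)), ∃ S ∈ 𝒮,
          B A = some S ∧
          prEvt μ (fun C => B C = some S ∧ rowsAgree (i : ℕ) C A)
            ≤ δ * prEvt μ (fun C => rowsAgree (i : ℕ) C A)) := by
    refine prEvt_mono μ hμ0 fun A hA hbad => ?_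
    obtain ⟨hnr, i, hi⟩ := hbad
    obtain ⟨S, hBS, hScard, -⟩ := (hB A hA).2 hnr
    refine ⟨i, Finset.mem_univ _, S, ?_, hBS, ?_⟩
    · rw [h𝒮, Finset.mem_filter]; exact ⟨Finset.mem_univ _, hScard⟩
    · have hnum : prEvt μ (fun C => B C = B A ∧ rowsAgree (i : ℕ) C A)
          = prEvt μ (fun C => B C = some S ∧ rowsAgree (i : ℕ) C A) :=
        prEvt_congr μ fun C => by rw [hBS]
      rw [hnum] at hi
      have hden : 0 < prEvt μ (fun C => rowsAgree (i : ℕ) C A) :=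
        lt_of_lt_of_le hA (mu_le_den μ hμ0 _ A)
      calc prEvt μ (fun C => B C = some S ∧ rowsAgree (i : ℕ) C A)
          = prEvt μ (fun C => B C = some S ∧ rowsAgree (i : ℕ) C A)
              / prEvt μ (fun C => rowsAgree (i : ℕ) C A)
              * prEvt μ (fun C => rowsAgree (i : ℕ) C A) := by field_simp
        _ ≤ δ * prEvt μ (fun C => rowsAgree (i : ℕ) C A) :=
            mul_le_mul_of_nonneg_right (le_of_lt hi) (le_of_lt hden)
  refine hsub.trans ((prEvt_exists_le μ hμ0 Finset.univ _).trans ?_)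
  have hterm : ∀ i : Fin m,
      prEvt μ (fun A => ∃ S ∈ 𝒮, B A = some S ∧
          prEvt μ (fun C => B C = some S ∧ rowsAgree (i : ℕ) C A)
            ≤ δ * prEvt μ (fun C => rowsAgree (i : ℕ) C A))
        ≤ (𝒮.card : ℝ) * δ := by
    intro i
    refine (prEvt_exists_le μ hμ0 𝒮 _).trans ?_
    have hone : ∀ S ∈ 𝒮, prEvt μ (fun A => B A = some S ∧
        prEvt μ (fun C => B C = some S ∧ rowsAgree (i : ℕ) C A)
          ≤ δ * prEvt μ (fun C => rowsAgree (i : ℕ) C A)) ≤ δ := by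
      intro S _
      refine key_bound μ hμ0 hμ1 (i : ℕ) (le_of_lt hδ) (fun A => B A = some S) _
        (fun A hc => hc) ?_
      intro A A' h hc
      rw [← prEvt_rowsAgree_congr μ (fun C => B C = some S) h, ← den_rowsAgree_congr μ h]
      exact hc
    calc (∑ S ∈ 𝒮, prEvt μ (fun A => B A = some S ∧
        prEvt μ (fun C => B C = some S ∧ rowsAgree (i : ℕ) C A)
          ≤ δ * prEvt μ (fun C => rowsAgree (i : ℕ) C A)))
        ≤ ∑ _S ∈ 𝒮, δ := Finset.sum_le_sum hone
      _ = (𝒮.card : ℝ) * δ := by rw [Finset.sum_const, nsmul_eq_mul]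
  calc (∑ i : Fin m, prEvt μ (fun A => ∃ S ∈ 𝒮, B A = some S ∧
        prEvt μ (fun C => B C = some S ∧ rowsAgree (i : ℕ) C A)
          ≤ δ * prEvt μ (fun C => rowsAgree (i : ℕ) C A)))
      ≤ ∑ _i : Fin m, (𝒮.card : ℝ) * δ := Finset.sum_le_sum fun i _ => hterm i
    _ = (m : ℝ) * ((𝒮.card : ℝ) * δ) := by
        rw [Finset.sum_const, Finset.card_univ, Fintype.card_fin, nsmul_eq_mul]

end Aux

lemma card_filter_card_le (N t : ℕ) :
    (Finset.univ.filter fun S : Finset (Fin N) => S.card ≤ t).card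
      = ∑ k ∈ Finset.range (t+1), N.choose k := by
  classical
  have hset : (Finset.univ.filter fun S : Finset (Fin N) => S.card ≤ t)
      = (Finset.range (t+1)).biUnion fun k => Finset.powersetCard k Finset.univ := by
    ext S
    simp [Finset.mem_powersetCard_univ, Nat.lt_succ_iff]
  rw [hset, Finset.card_biUnion]
  · refine Finset.sum_congr rfl fun k _ => ?_
    rw [Finset.card_powersetCard, Finset.card_univ, Fintype.card_fin]
  · intro a _ b _ hab
    simp only [Finset.disjoint_left, Finset.mem_powersetCard_univ]
    intro S hSa hSb
    exact hab (by rw [← hSa, hSb])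

lemma choose_sum_le (N : ℕ) (η : ℝ) (hη0 : 0 < η) (hη : η < 1/2) :
    (∑ k ∈ Finset.range (⌊η * (N : ℝ)⌋₊ + 1), (N.choose k : ℝ)) ≤ (2 : ℝ) ^ (binEnt η * N) := by
  set t := ⌊η * (N : ℝ)⌋₊ with ht
  have hη1 : η < 1 := lt_trans hη (by norm_num)
  have h1η : 0 < 1 - η := by linarith
  have hx0 : 0 < η / (1 - η) := div_pos hη0 h1η
  have hx1 : η / (1 - η) ≤ 1 := by rw [div_le_one h1η]; linarith
  have htle : (t : ℝ) ≤ η * N := Nat.floor_le (by positivity)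
  have htN : t ≤ N := by
    have h1 : (t : ℝ) ≤ (N : ℝ) := le_trans htle
      (by nlinarith [Nat.cast_nonneg (α := ℝ) N])
    exact_mod_cast h1
  set q : ℝ := (2 : ℝ) ^ (-(binEnt η * N)) with hq
  have hq0 : 0 < q := Real.rpow_pos_of_pos two_pos _
  have hqeq : q = η ^ (η * (N : ℝ)) * (1 - η) ^ ((1 - η) * (N : ℝ)) := by
    have e1 : η ^ (η * (N : ℝ)) = (2 : ℝ) ^ (Real.logb 2 η * (η * N)) := by
      rw [Real.rpow_mul (le_of_lt two_pos), Real.rpow_logb two_pos (by norm_num) hη0]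
    have e2 : (1 - η) ^ ((1 - η) * (N : ℝ)) = (2 : ℝ) ^ (Real.logb 2 (1 - η) * ((1 - η) * N)) := by
      rw [Real.rpow_mul (le_of_lt two_pos), Real.rpow_logb two_pos (by norm_num) h1η]
    rw [e1, e2, ← Real.rpow_add two_pos, hq]
    congr 1
    rw [binEnt]; ring
  have hkey : ∀ k ∈ Finset.range (t+1), q ≤ η ^ k * (1 - η) ^ (N - k) := by
    intro k hk
    rw [Finset.mem_range, Nat.lt_succ_iff] at hk
    have hkN : k ≤ N := le_trans hk htN
    have hkη : (k : ℝ) ≤ η * N := le_trans (by exact_mod_cast hk) htle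
    have mono : (η / (1 - η)) ^ (η * (N : ℝ)) ≤ (η / (1 - η)) ^ (k : ℝ) :=
      Real.rpow_le_rpow_of_exponent_ge hx0 hx1 hkη
    have hql : q = (1 - η) ^ (N : ℝ) * (η / (1 - η)) ^ (η * (N : ℝ)) := by
      rw [hqeq, Real.div_rpow (le_of_lt hη0) (le_of_lt h1η),
        show (1 - η) * (N : ℝ) = (N : ℝ) - η * N by ring, Real.rpow_sub h1η]
      have hne : (1 - η) ^ (η * (N : ℝ)) ≠ 0 := ne_of_gt (Real.rpow_pos_of_pos h1η _)
      field_simp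
    have hwr : η ^ k * (1 - η) ^ (N - k) = (1 - η) ^ (N : ℝ) * (η / (1 - η)) ^ (k : ℝ) := by
      rw [Real.div_rpow (le_of_lt hη0) (le_of_lt h1η), Real.rpow_natCast,
        Real.rpow_natCast, Real.rpow_natCast, pow_sub₀ (1 - η) (ne_of_gt h1η) hkN]
      field_simp
    rw [hql, hwr]
    exact mul_le_mul_of_nonneg_left mono (Real.rpow_nonneg (le_of_lt h1η) _)
  have hsum1 : ∑ k ∈ Finset.range (N+1), (N.choose k : ℝ) * (η ^ k * (1 - η) ^ (N - k)) = 1 := by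
    calc ∑ k ∈ Finset.range (N+1), (N.choose k : ℝ) * (η ^ k * (1 - η) ^ (N - k))
        = (η + (1 - η)) ^ N := by
          rw [add_pow]
          exact Finset.sum_congr rfl fun k _ => by ring
      _ = 1 := by norm_num
  have hchain : (∑ k ∈ Finset.range (t+1), (N.choose k : ℝ)) * q ≤ 1 := by
    rw [Finset.sum_mul]
    calc ∑ k ∈ Finset.range (t+1), (N.choose k : ℝ) * q
        ≤ ∑ k ∈ Finset.range (t+1), (N.choose k : ℝ) * (η ^ k * (1 - η) ^ (N - k)) :=
          Finset.sum_le_sum fun k hk =>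
            mul_le_mul_of_nonneg_left (hkey k hk) (Nat.cast_nonneg _)
      _ ≤ ∑ k ∈ Finset.range (N+1), (N.choose k : ℝ) * (η ^ k * (1 - η) ^ (N - k)) := by
          refine Finset.sum_le_sum_of_subset_of_nonneg
            (Finset.range_subset_range.2 (by omega)) fun k _ _ => ?_
          have := le_of_lt h1η
          positivity
      _ = 1 := hsum1
  have hfin : (∑ k ∈ Finset.range (t+1), (N.choose k : ℝ)) ≤ 1 / q :=
    (le_div_iff₀ hq0).2 hchain
  refine hfin.trans (le_of_eq ?_)
  rw [hq, Real.rpow_neg (by norm_num : (0:ℝ) ≤ 2), one_div, inv_inv]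

/-- The probability that the random matrix is `(τ,δ)`-bad is at most
`m·2^{-τn} + m·δ·2^{h(η)m}` where `η = √(τ+γ)`. -/
theorem prob_bad_le (m n : ℕ) (hm : 1 ≤ m) (hn : 1 ≤ n)
    (μ : Matrix (Fin m) (Fin n) (ZMod 2) → ℝ)
    (hμ0 : ∀ A, 0 ≤ μ A) (hμ1 : ∑ A, μ A = 1)
    (γ τ δ : ℝ) (hγ : 0 < γ) (hτ : 0 < τ) (hδ : 0 < δ)
    (hη : Real.sqrt (τ + γ) < 1 / 2)
    (B : Matrix (Fin m) (Fin n) (ZMod 2) → Option (Finset (Fin m)))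
    (hB : IsBadSetAssignment μ τ γ B) :
    prEvt μ (IsTauDeltaBad μ τ δ B) ≤
      (m : ℝ) * (2 : ℝ) ^ (-(τ * (n : ℝ)))
        + (m : ℝ) * δ * (2 : ℝ) ^ (binEnt (Real.sqrt (τ + γ)) * (m : ℝ)) := by
  classical
  set η := Real.sqrt (τ + γ) with hηdef
  have hη0 : 0 < η := Real.sqrt_pos.2 (by linarith)
  -- split the bad event
  have hsplit : prEvt μ (IsTauDeltaBad μ τ δ B)
      ≤ prEvt μ (tauRare μ τ)
        + prEvt μ (fun A => ¬ tauRare μ τ A ∧ ∃ i : Fin m,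
            prEvt μ (fun C => B C = B A ∧ rowsAgree (i : ℕ) C A)
              / prEvt μ (fun C => rowsAgree (i : ℕ) C A) < δ) := by
    refine le_trans (prEvt_mono μ hμ0 fun A _ hbad => ?_) (prEvt_union_le μ hμ0 _ _)
    by_cases hr : tauRare μ τ A
    · exact Or.inl hr
    · rcases hbad with hr' | hex
      · exact Or.inl hr'
      · exact Or.inr ⟨hr, hex⟩
  have h1 := rare_bound μ hμ0 hμ1 τ
  have h2 := part2_bound μ hμ0 hμ1 τ γ δ hδ B hB
  -- bound the cardinality
  set 𝒮 : Finset (Finset (Fin m)) :=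
    Finset.univ.filter fun S : Finset (Fin m) => (S.card : ℝ) ≤ η * (m : ℝ) with h𝒮
  have hcard : (𝒮.card : ℝ) ≤ (2 : ℝ) ^ (binEnt η * (m : ℝ)) := by
    have hfe : 𝒮 = Finset.univ.filter fun S : Finset (Fin m) => S.card ≤ ⌊η * (m : ℝ)⌋₊ := by
      rw [h𝒮]
      refine Finset.filter_congr fun S _ => ?_
      rw [Nat.le_floor_iff (by positivity)]
    rw [hfe, card_filter_card_le]
    calc ((∑ k ∈ Finset.range (⌊η * (m : ℝ)⌋₊ + 1), m.choose k : ℕ) : ℝ)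
        = ∑ k ∈ Finset.range (⌊η * (m : ℝ)⌋₊ + 1), (m.choose k : ℝ) := by push_cast; rfl
      _ ≤ (2 : ℝ) ^ (binEnt η * (m : ℝ)) := choose_sum_le m η hη0 hη
  have h3 : (m : ℝ) * ((𝒮.card : ℝ) * δ)
      ≤ (m : ℝ) * δ * (2 : ℝ) ^ (binEnt η * (m : ℝ)) := by
    have hm0 : (0 : ℝ) ≤ (m : ℝ) := Nat.cast_nonneg m
    calc (m : ℝ) * ((𝒮.card : ℝ) * δ) = (m : ℝ) * δ * (𝒮.card : ℝ) := by ring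
      _ ≤ (m : ℝ) * δ * (2 : ℝ) ^ (binEnt η * (m : ℝ)) :=
          mul_le_mul_of_nonneg_left hcard (by positivity)
  calc prEvt μ (IsTauDeltaBad μ τ δ B)
      ≤ prEvt μ (tauRare μ τ)
        + prEvt μ (fun A => ¬ tauRare μ τ A ∧ ∃ i : Fin m,
            prEvt μ (fun C => B C = B A ∧ rowsAgree (i : ℕ) C A)
              / prEvt μ (fun C => rowsAgree (i : ℕ) C A) < δ) := hsplit
    _ ≤ (m : ℝ) * (2 : ℝ) ^ (-(τ * (n : ℝ))) + (m : ℝ) * ((𝒮.card : ℝ) * δ) :=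
        add_le_add h1 h2
    _ ≤ (m : ℝ) * (2 : ℝ) ^ (-(τ * (n : ℝ)))
        + (m : ℝ) * δ * (2 : ℝ) ^ (binEnt η * (m : ℝ)) := add_le_add le_rfl h3
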